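/- arXiv:0804.2596 — 2 statements merged into one kernel-verified Lean document; each statement's English description precedes it below -/
import Mathlib

section
/- Let q ≥ 1, let w₁,…,w_q be non-negative integers with Σ_{i=1}^q w_i ≥ 1, and let δ ∈ ℕ. Let h : ℝ^q → ℝ be a C^∞ function which is quasihomogeneous of degree δ for the weights w, i.e. h(s^{w₁}x₁,…,s^{w_q}x_q) = s^δ·h(x) for all s ∈ (0,1] and all x ∈ ℝ^q. Then for every C^∞ function f : ℝ^q → ℝ there exists a C^∞ vector field Y : ℝ^q → ℝ^q such that Σ_{i=1}^q ∂(h·Y_i)/∂x_i (x) = h(x)·f(x) for all x ∈ ℝ^q. -/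
set_option maxHeartbeats 1000000
set_option synthInstance.maxHeartbeats 200000
set_option linter.unusedSectionVars false

open MeasureTheory intervalIntegral Metric Set

section ParametricIntegral

variable {E F : Type} [NormedAddCommGroup E] [NormedSpace ℝ E] [ProperSpace E]

/-- The derivative of a slice of a smooth two-variable function, as a function of both
variables. -/
noncomputable def sliceDeriv [NormedAddCommGroup F] [NormedSpace ℝ F]
    (φ : ℝ × E → F) : ℝ × E → (E →L[ℝ] F) :=
  fun p => (fderiv ℝ φ p).comp ((0 : E →L[ℝ] ℝ).prod (ContinuousLinearMap.id ℝ E))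

theorem hasFDerivAt_slice [NormedAddCommGroup F] [NormedSpace ℝ F]
    {φ : ℝ × E → F} (hφ : ContDiff ℝ (⊤ : ℕ∞) φ) (s : ℝ) (x : E) :
    HasFDerivAt (fun y => φ (s, y)) (sliceDeriv φ (s, x)) x := by
  have h1 : HasFDerivAt (fun y : E => ((s, y) : ℝ × E))
      ((0 : E →L[ℝ] ℝ).prod (ContinuousLinearMap.id ℝ E)) x :=
    (hasFDerivAt_const s x).prodMk (hasFDerivAt_id x)
  exact ((hφ.differentiable (by simp) (s, x)).hasFDerivAt).comp x h1

theorem contDiff_sliceDeriv [NormedAddCommGroup F] [NormedSpace ℝ F]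
    {φ : ℝ × E → F} (hφ : ContDiff ℝ (⊤ : ℕ∞) φ) :
    ContDiff ℝ (⊤ : ℕ∞) (sliceDeriv φ) := by
  have h1 : ContDiff ℝ (⊤ : ℕ∞) (fderiv ℝ φ) := (contDiff_infty_iff_fderiv.mp hφ).2
  exact h1.clm_comp contDiff_const

theorem key_hasFDerivAt [NormedAddCommGroup F] [NormedSpace ℝ F] [CompleteSpace F]
    (φ : ℝ × E → F) (hφ : ContDiff ℝ (⊤ : ℕ∞) φ) (x₀ : E) :
    HasFDerivAt (fun x => ∫ s in (0:ℝ)..1, φ (s, x))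
      (∫ s in (0:ℝ)..1, sliceDeriv φ (s, x₀)) x₀ := by
  have hψ : Continuous (sliceDeriv φ) := (contDiff_sliceDeriv hφ).continuous
  obtain ⟨C, hC⟩ :=
    ((isCompact_Icc (a := (0:ℝ)) (b := 1)).prod
      (isCompact_closedBall x₀ 1)).exists_bound_of_continuousOn hψ.continuousOn
  have hmem : ∀ t ∈ Set.uIoc (0:ℝ) 1, t ∈ Icc (0:ℝ) 1 := by
    intro t ht
    rw [Set.uIoc_of_le (by norm_num : (0:ℝ) ≤ 1)] at ht
    exact Ioc_subset_Icc_self ht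
  apply intervalIntegral.hasFDerivAt_integral_of_dominated_of_fderiv_le
    (F' := fun x t => sliceDeriv φ (t, x)) (bound := fun _ => C) (ball_mem_nhds x₀ one_pos)
  · filter_upwards with x
    exact (hφ.continuous.comp (continuous_id.prodMk continuous_const)).aestronglyMeasurable
  · exact (hφ.continuous.comp (continuous_id.prodMk continuous_const)).intervalIntegrable 0 1
  · exact (hψ.comp (continuous_id.prodMk continuous_const)).aestronglyMeasurable
  · filter_upwards with t
    intro ht x hx
    exact hC (t, x) ⟨hmem t ht, ball_subset_closedBall hx⟩
  · exact intervalIntegrable_const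
  · filter_upwards with t
    intro ht x hx
    exact hasFDerivAt_slice hφ t x

theorem key_contDiff_aux (n : ℕ) :
    ∀ (F : Type) [NormedAddCommGroup F] [NormedSpace ℝ F] [CompleteSpace F]
      (φ : ℝ × E → F), ContDiff ℝ (⊤ : ℕ∞) φ →
      ContDiff ℝ ((n : ℕ∞) : WithTop ℕ∞) (fun x => ∫ s in (0:ℝ)..1, φ (s, x)) := by
  induction n with
  | zero =>
    intro F _ _ _ φ hφ
    have hD : Differentiable ℝ (fun x => ∫ s in (0:ℝ)..1, φ (s, x)) :=
      fun x => (key_hasFDerivAt φ hφ x).differentiableAt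
    exact_mod_cast contDiff_zero.mpr hD.continuous
  | succ n ih =>
    intro F _ _ _ φ hφ
    have hD : Differentiable ℝ (fun x => ∫ s in (0:ℝ)..1, φ (s, x)) :=
      fun x => (key_hasFDerivAt φ hφ x).differentiableAt
    have hfd : (fderiv ℝ (fun x => ∫ s in (0:ℝ)..1, φ (s, x)))
        = fun x => ∫ s in (0:ℝ)..1, sliceDeriv φ (s, x) :=
      funext fun x => (key_hasFDerivAt φ hφ x).fderiv
    have hcast : (((n+1 : ℕ) : ℕ∞) : WithTop ℕ∞) = ((n : ℕ∞) : WithTop ℕ∞) + 1 := by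
      norm_cast
    rw [hcast, contDiff_succ_iff_fderiv]
    refine ⟨hD, ?_, ?_⟩
    · intro h'
      exact absurd h' (by simp)
    · rw [hfd]
      exact ih (E →L[ℝ] F) (sliceDeriv φ) (contDiff_sliceDeriv hφ)

theorem key_contDiff {F : Type} [NormedAddCommGroup F] [NormedSpace ℝ F] [CompleteSpace F]
    (φ : ℝ × E → F) (hφ : ContDiff ℝ (⊤ : ℕ∞) φ) :
    ContDiff ℝ (⊤ : ℕ∞) (fun x => ∫ s in (0:ℝ)..1, φ (s, x)) :=
  contDiff_infty.mpr fun n => by exact_mod_cast key_contDiff_aux n F φ hφ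

/-- Evaluate a continuous linear map on `Fin q → ℝ` as a sum of partial evaluations. -/
theorem clm_apply_eq_sum {q : ℕ} (T : (Fin q → ℝ) →L[ℝ] ℝ) (v : Fin q → ℝ) :
    T v = ∑ i, v i * T (Pi.single i 1) := by
  conv_lhs => rw [← Finset.univ_sum_single v]
  rw [map_sum]
  refine Finset.sum_congr rfl fun i _ => ?_
  have e : Pi.single i (v i) = v i • (Pi.single i 1 : Fin q → ℝ) := by
    rw [← Pi.single_smul, smul_eq_mul, mul_one]
  rw [e, _root_.map_smul, smul_eq_mul]

end ParametricIntegral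

open Finset in
/-- Lemma 4.5 (rP) in divergence form: if `h` is quasihomogeneous of degree `δ` for non-negative
weights `w` with positive total weight, then for every smooth `f` there is a smooth vector field
`Y` with `div (h·Y) = h·f`. -/
theorem wqh_relative_poincare
    (q : ℕ) (hq : 1 ≤ q) (w : Fin q → ℕ) (hw : 1 ≤ ∑ i, w i) (δ : ℕ)
    (h : (Fin q → ℝ) → ℝ) (hh : ContDiff ℝ (⊤ : ℕ∞) h)
    (hqh : ∀ s ∈ Set.Ioc (0:ℝ) 1, ∀ x : Fin q → ℝ,
      h (fun i => s ^ (w i) * x i) = s ^ δ * h x)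
    (f : (Fin q → ℝ) → ℝ) (hf : ContDiff ℝ (⊤ : ℕ∞) f) :
    ∃ Y : (Fin q → ℝ) → (Fin q → ℝ), ContDiff ℝ (⊤ : ℕ∞) Y ∧
      ∀ x : Fin q → ℝ,
        (∑ i, fderiv ℝ (fun y => h y * Y y i) x (Pi.single i 1)) = h x * f x := by
  classical
  set m : ℕ := δ + ∑ i, w i with hm_def
  have hm1 : 1 ≤ m := le_add_of_nonneg_of_le (Nat.zero_le _) hw
  have hle1 : ((⊤ : ℕ∞) : WithTop ℕ∞) ≠ 0 := by simp
  set φ : ℝ × (Fin q → ℝ) → ℝ :=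
    fun p => p.1 ^ (m - 1) * f (fun i => p.1 ^ (w i) * p.2 i) with hφ_def
  have hφ : ContDiff ℝ (⊤ : ℕ∞) φ := by
    apply ContDiff.mul (contDiff_fst.pow _)
    apply hf.comp
    exact contDiff_pi.mpr fun i => (contDiff_fst.pow _).mul
      ((ContinuousLinearMap.proj i : (Fin q → ℝ) →L[ℝ] ℝ).contDiff.comp contDiff_snd)
  set G : (Fin q → ℝ) → ℝ := fun x => ∫ s in (0:ℝ)..1, φ (s, x) with hG_def
  have hG : ContDiff ℝ (⊤ : ℕ∞) G := key_contDiff φ hφ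
  -- Euler identity for h
  have hEuler : ∀ y : Fin q → ℝ, fderiv ℝ h y (fun i => (w i : ℝ) * y i) = (δ : ℝ) * h y := by
    intro y
    set v : Fin q → ℝ := fun i => (w i : ℝ) * y i with hv_def
    set s : ℝ := 1/2 with hs_def
    set x : Fin q → ℝ := fun i => 2 ^ (w i) * y i with hx_def
    have hyx : (fun i => s ^ (w i) * x i) = y := by
      funext i
      simp only [hs_def, hx_def]
      rw [← mul_assoc, ← mul_pow]
      norm_num
    have inner : HasDerivAt (fun t : ℝ => (fun i => t ^ (w i) * x i))
        (fun i => (w i : ℝ) * s ^ (w i - 1) * x i) s :=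
      hasDerivAt_pi.mpr fun i => (hasDerivAt_pow (w i) s).mul_const (x i)
    have hA : HasDerivAt (fun t : ℝ => h (fun i => t ^ (w i) * x i))
        ((fderiv ℝ h y) (fun i => (w i : ℝ) * s ^ (w i - 1) * x i)) s := by
      have hl : HasFDerivAt h (fderiv ℝ h y) ((fun t : ℝ => fun i => t ^ (w i) * x i) s) := by
        rw [show (fun t : ℝ => fun i => t ^ (w i) * x i) s = y from hyx]
        exact (hh.differentiable hle1 y).hasFDerivAt
      exact HasFDerivAt.comp_hasDerivAt (f := fun t : ℝ => fun i => t ^ (w i) * x i)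
        (x := s) hl inner
    have hB : HasDerivAt (fun t : ℝ => t ^ δ * h x) ((δ : ℝ) * s ^ (δ - 1) * h x) s :=
      (hasDerivAt_pow δ s).mul_const (h x)
    have hAB : (fun t : ℝ => h (fun i => t ^ (w i) * x i)) =ᶠ[nhds s]
        (fun t : ℝ => t ^ δ * h x) := by
      refine Filter.eventuallyEq_of_mem
        (Ioo_mem_nhds (by norm_num [hs_def]) (by norm_num [hs_def]) :
          Set.Ioo (0:ℝ) 1 ∈ nhds s) fun t ht => ?_
      exact hqh t ⟨ht.1, le_of_lt ht.2⟩ x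
    have hB' : HasDerivAt (fun t : ℝ => h (fun i => t ^ (w i) * x i))
        ((δ : ℝ) * s ^ (δ - 1) * h x) s := hB.congr_of_eventuallyEq hAB
    have hkey := hA.unique hB'
    have hvec : (fun i => (w i : ℝ) * s ^ (w i - 1) * x i) = (2 : ℝ) • v := by
      funext i
      simp only [Pi.smul_apply, smul_eq_mul, hv_def, hs_def, hx_def]
      cases w i with
      | zero => simp
      | succ k =>
        simp only [Nat.add_sub_cancel]
        push_cast
        have h2 : ((1:ℝ)/2) ^ k * (2:ℝ) ^ (k+1) = 2 := by
          rw [div_pow, one_pow, pow_succ]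
          rw [div_mul_eq_mul_div, one_mul, mul_comm ((2:ℝ)^k) 2, mul_div_assoc,
            div_self (by positivity), mul_one]
        linear_combination ((k : ℝ) + 1) * y i * h2
    have hhx : h x = 2 ^ δ * h y := by
      have hq2 := hqh s ⟨by norm_num [hs_def], by norm_num [hs_def]⟩ x
      rw [hyx, hs_def] at hq2
      rw [hq2, ← mul_assoc, ← mul_pow]
      norm_num
    have hsc : (δ : ℝ) * s ^ (δ - 1) * (2 : ℝ) ^ δ = 2 * δ := by
      cases δ with
      | zero => simp
      | succ k =>
        simp only [Nat.add_sub_cancel, hs_def]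
        push_cast
        have h2 : ((1:ℝ)/2) ^ k * (2:ℝ) ^ (k+1) = 2 := by
          rw [div_pow, one_pow, pow_succ]
          rw [div_mul_eq_mul_div, one_mul, mul_comm ((2:ℝ)^k) 2, mul_div_assoc,
            div_self (by positivity), mul_one]
        linear_combination ((k : ℝ) + 1) * h2
    rw [hvec, _root_.map_smul, smul_eq_mul, hhx] at hkey
    have h2key : 2 * (fderiv ℝ h y) v = 2 * ((δ : ℝ) * h y) := by
      rw [hkey]
      linear_combination h y * hsc
    exact mul_left_cancel₀ two_ne_zero h2key
  -- derivative of G on the Euler vector field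
  have hDG : ∀ x : Fin q → ℝ,
      fderiv ℝ G x (fun i => (w i : ℝ) * x i) = f x - (m : ℝ) * G x := by
    intro x
    set L : ℝ → (Fin q → ℝ) →L[ℝ] (Fin q → ℝ) :=
      fun s => ContinuousLinearMap.pi (fun i => (s ^ (w i) : ℝ) • (ContinuousLinearMap.proj i))
      with hL_def
    have hLapp : ∀ (s : ℝ) (v : Fin q → ℝ), L s v = fun i => s ^ (w i) * v i := by
      intro s v; funext i; simp [hL_def]
    have hslice : ∀ s : ℝ, HasFDerivAt (fun y : Fin q → ℝ => φ (s, y))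
        ((s ^ (m-1)) • ((fderiv ℝ f (fun i => s ^ (w i) * x i)).comp (L s))) x := by
      intro s
      have hLder : HasFDerivAt (fun y : Fin q → ℝ => (fun i => s ^ (w i) * y i)) (L s) x := by
        apply ((L s).hasFDerivAt (x := x)).congr_of_eventuallyEq
        filter_upwards with y using (hLapp s y).symm
      exact (HasFDerivAt.comp x
        ((hf.differentiable hle1 (fun i => s ^ (w i) * x i)).hasFDerivAt) hLder).const_mul
        (s ^ (m-1))
    have hψval : ∀ s : ℝ, sliceDeriv φ (s, x)
        = (s ^ (m-1)) • ((fderiv ℝ f (fun i => s ^ (w i) * x i)).comp (L s)) := fun s =>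
      (hasFDerivAt_slice hφ s x).unique (hslice s)
    set u : ℝ → ℝ := fun s => f (fun i => s ^ (w i) * x i) with hu_def
    set u' : ℝ → ℝ := fun s =>
      fderiv ℝ f (fun i => s ^ (w i) * x i) (fun i => (w i : ℝ) * s ^ (w i - 1) * x i)
      with hu'_def
    have hu : ∀ s : ℝ, HasDerivAt u (u' s) s := by
      intro s
      have inner : HasDerivAt (fun t : ℝ => (fun i => t ^ (w i) * x i))
          (fun i => (w i : ℝ) * s ^ (w i - 1) * x i) s :=
        hasDerivAt_pi.mpr fun i => (hasDerivAt_pow (w i) s).mul_const (x i)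
      have hl : HasFDerivAt f (fderiv ℝ f (fun i => s ^ (w i) * x i))
          ((fun t : ℝ => fun i => t ^ (w i) * x i) s) :=
        (hf.differentiable hle1 _).hasFDerivAt
      exact HasFDerivAt.comp_hasDerivAt (f := fun t : ℝ => fun i => t ^ (w i) * x i)
        (x := s) hl inner
    have hσcont : Continuous (fun s : ℝ => (fun i => s ^ (w i) * x i)) :=
      continuous_pi fun i => (continuous_pow (w i)).mul continuous_const
    have hu'cont : Continuous u' := by
      rw [hu'_def]
      exact Continuous.clm_apply ((hf.continuous_fderiv hle1).comp hσcont)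
        (continuous_pi fun i =>
          (continuous_const.mul (continuous_pow (w i - 1))).mul continuous_const)
    have hfd : fderiv ℝ G x = ∫ s in (0:ℝ)..1, sliceDeriv φ (s, x) :=
      (key_hasFDerivAt φ hφ x).fderiv
    have hint : IntervalIntegrable (fun s => sliceDeriv φ (s, x)) volume 0 1 :=
      (((contDiff_sliceDeriv hφ).continuous).comp
        (continuous_id.prodMk continuous_const)).intervalIntegrable 0 1
    have hintegrand : ∀ s : ℝ,
        (sliceDeriv φ (s, x)) (fun i => (w i : ℝ) * x i) = s ^ m * u' s := by
      intro s
      rw [hψval s]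
      simp only [ContinuousLinearMap.smul_apply, ContinuousLinearMap.comp_apply, smul_eq_mul,
        hLapp]
      have hvec : (fun i => s ^ (w i) * ((w i : ℝ) * x i))
          = s • ((fun i => (w i : ℝ) * s ^ (w i - 1) * x i) : Fin q → ℝ) := by
        funext i
        simp only [Pi.smul_apply, smul_eq_mul]
        cases w i with
        | zero => simp
        | succ k =>
          simp only [Nat.add_sub_cancel]
          push_cast
          ring
      rw [hvec, _root_.map_smul, smul_eq_mul]
      simp only [hu'_def]
      rw [show s ^ m = s ^ (m-1) * s by rw [← pow_succ, Nat.sub_add_cancel hm1]]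
      ring
    have hparts := intervalIntegral.integral_mul_deriv_eq_deriv_mul
      (u := fun s : ℝ => s ^ m) (u' := fun s : ℝ => (m : ℝ) * s ^ (m - 1))
      (v := u) (v' := u')
      (fun s _ => hasDerivAt_pow m s) (fun s _ => hu s)
      ((continuous_const.mul (continuous_pow (m-1))).intervalIntegrable 0 1)
      (hu'cont.intervalIntegrable 0 1)
    rw [hfd, ContinuousLinearMap.intervalIntegral_apply hint]
    calc (∫ s in (0:ℝ)..1, (sliceDeriv φ (s, x)) (fun i => (w i : ℝ) * x i))
        = ∫ s in (0:ℝ)..1, s ^ m * u' s :=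
          intervalIntegral.integral_congr fun s _ => hintegrand s
      _ = (1:ℝ)^m * u 1 - (0:ℝ)^m * u 0 - ∫ s in (0:ℝ)..1, ((m : ℝ) * s^(m-1)) * u s := hparts
      _ = f x - (m : ℝ) * G x := by
          have hu1 : u 1 = f x := by
            simp only [hu_def, one_pow, one_mul]
          have hint2 : (∫ s in (0:ℝ)..1, ((m : ℝ) * s^(m-1)) * u s) = (m : ℝ) * G x := by
            have e : (∫ s in (0:ℝ)..1, ((m : ℝ) * s^(m-1)) * u s)
                = ∫ s in (0:ℝ)..1, (m : ℝ) * (s^(m-1) * u s) :=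
              intervalIntegral.integral_congr fun s _ => by ring
            rw [e, intervalIntegral.integral_const_mul]
          rw [hu1, hint2, one_pow, zero_pow (by omega : m ≠ 0)]
          ring
  -- the vector field
  refine ⟨fun x i => (w i : ℝ) * x i * G x, ?_, ?_⟩
  · exact contDiff_pi.mpr fun i =>
      ((contDiff_const.mul
        ((ContinuousLinearMap.proj i : (Fin q → ℝ) →L[ℝ] ℝ).contDiff)).mul hG)
  · intro x
    have hGx : HasFDerivAt G (fderiv ℝ G x) x := (hG.differentiable hle1 x).hasFDerivAt
    have hhx : HasFDerivAt h (fderiv ℝ h x) x := (hh.differentiable hle1 x).hasFDerivAt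
    have hterm : ∀ i, fderiv ℝ (fun y => h y * ((w i : ℝ) * y i * G y)) x (Pi.single i 1)
        = h x * (((w i : ℝ) * x i) * fderiv ℝ G x (Pi.single i 1) + G x * (w i : ℝ))
          + ((w i : ℝ) * x i * G x) * fderiv ℝ h x (Pi.single i 1) := by
      intro i
      have hci : HasFDerivAt (fun y : Fin q → ℝ => (w i : ℝ) * y i * G y)
          (((w i : ℝ) * x i) • fderiv ℝ G x
            + G x • ((w i : ℝ) • (ContinuousLinearMap.proj i : (Fin q → ℝ) →L[ℝ] ℝ))) x :=
        HasFDerivAt.mul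
          ((ContinuousLinearMap.proj i : (Fin q → ℝ) →L[ℝ] ℝ).hasFDerivAt.const_mul ((w i : ℝ)))
          hGx
      have hhi : HasFDerivAt (fun y => h y * ((w i : ℝ) * y i * G y))
          (h x • (((w i : ℝ) * x i) • fderiv ℝ G x
              + G x • ((w i : ℝ) • (ContinuousLinearMap.proj i : (Fin q → ℝ) →L[ℝ] ℝ)))
            + ((w i : ℝ) * x i * G x) • fderiv ℝ h x) x := hhx.mul hci
      rw [hhi.fderiv]
      simp only [ContinuousLinearMap.add_apply, ContinuousLinearMap.smul_apply,
        ContinuousLinearMap.proj_apply, Pi.single_eq_same, smul_eq_mul]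
      ring
    have e1 : (∑ i, ((w i : ℝ) * x i) * fderiv ℝ G x (Pi.single i 1))
        = fderiv ℝ G x (fun i => (w i : ℝ) * x i) := (clm_apply_eq_sum _ _).symm
    have e2 : (∑ i, ((w i : ℝ) * x i) * fderiv ℝ h x (Pi.single i 1))
        = fderiv ℝ h x (fun i => (w i : ℝ) * x i) := (clm_apply_eq_sum _ _).symm
    calc (∑ i, fderiv ℝ (fun y => h y * ((fun x i => (w i : ℝ) * x i * G x) y i)) x
          (Pi.single i 1))
        = ∑ i, (h x * (((w i : ℝ) * x i) * fderiv ℝ G x (Pi.single i 1))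
            + h x * G x * (w i : ℝ)
            + G x * (((w i : ℝ) * x i) * fderiv ℝ h x (Pi.single i 1))) :=
          Finset.sum_congr rfl fun i _ => by
            have e0 : fderiv ℝ (fun y => h y * ((fun x i => (w i : ℝ) * x i * G x) y i)) x
                  (Pi.single i 1)
                = fderiv ℝ (fun y => h y * ((w i : ℝ) * y i * G y)) x (Pi.single i 1) := rfl
            rw [e0, hterm i]; ring
      _ = h x * (∑ i, ((w i : ℝ) * x i) * fderiv ℝ G x (Pi.single i 1))
            + h x * G x * (∑ i, (w i : ℝ))
            + G x * (∑ i, ((w i : ℝ) * x i) * fderiv ℝ h x (Pi.single i 1)) := by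
          simp only [Finset.sum_add_distrib, Finset.mul_sum]
      _ = h x * (f x - (m : ℝ) * G x) + h x * G x * (∑ i, (w i : ℝ))
            + G x * ((δ : ℝ) * h x) := by
          rw [e1, e2, hDG x, hEuler x]
      _ = h x * f x := by
          have hmcast : (m : ℝ) = (δ : ℝ) + ∑ i, (w i : ℝ) := by
            rw [hm_def]; push_cast; ring
          rw [hmcast]; ring
end

section
/- Let K be a field of characteristic zero and let f = (f₁,…,f_p) be a p-tuple of polynomials in K[x₁,…,x_n] which is quasihomogeneous for weights w ∈ ℕ^n (all w_i ≥ 0) with Σ_{i=1}^n w_i > 0 and weighted degrees δ ∈ ℤ^p, i.e. Σ_{i=1}^n w_i·x_i·∂f_j/∂x_i = δ_j·f_j for all j. Let T ⊆ K[x₁,…,x_n]^p be the set of all p-tuples of the form ( Σ_{i=1}^n a_i·∂f_j/∂x_i + Σ_{l=1}^p B_{jl}·f_l )_{j=1,…,p}, where a₁,…,a_n ∈ K[x₁,…,x_n] have zero constant term and satisfy Σ_{i=1}^n ∂a_i/∂x_i = 0 (a divergence-free polynomial vector field vanishing at 0), and B is an arbitrary p×p matrix over K[x₁,…,x_n]. Then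 for every n-tuple a' = (a'₁,…,a'_n) of polynomials with zero constant term (with no divergence condition), the tuple ( Σ_{i=1}^n a'_i·∂f_j/∂x_i )_{j=1,…,p} belongs to T. -/
open MvPolynomial Finset

lemma X_mul_pderiv_monomial'' {n : ℕ} {K : Type*} [CommSemiring K]
    (i : Fin n) (m : Fin n →₀ ℕ) (c : K) :
    X i * pderiv i (monomial m c) = monomial m (c * m i) := by
  rw [pderiv_monomial]
  rcases Nat.eq_zero_or_pos (m i) with h | h
  · simp [h]
  · rw [X, monomial_mul, one_mul]
    have hm : Finsupp.single i 1 + (m - Finsupp.single i 1) = m := by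
      ext j
      rcases eq_or_ne j i with rfl | hj
      · simp only [Finsupp.add_apply, Finsupp.tsub_apply, Finsupp.single_eq_same]; omega
      · simp [Finsupp.single_apply, (Ne.symm hj)]
    rw [hm]

lemma euler_op_monomial {n : ℕ} {K : Type*} [CommSemiring K]
    (w : Fin n → ℕ) (m : Fin n →₀ ℕ) (c : K) :
    ∑ i, C (w i : K) * (X i * pderiv i (monomial m c))
      = monomial m (((∑ i, w i * m i : ℕ) : K) * c) := by
  have : ∀ i ∈ univ, C (w i : K) * (X i * pderiv i (monomial m c))
      = monomial m (((w i * m i : ℕ) : K) * c) := by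
    intro i _
    rw [X_mul_pderiv_monomial'', C_mul_monomial]
    push_cast
    ring_nf
  rw [Finset.sum_congr rfl this, ← map_sum]
  congr 1
  rw [← Finset.sum_mul]
  push_cast
  ring_nf



open MvPolynomial Finset in
/-- Proposition 3.4 (inf-wqh), case `G = 𝒦_{Ω_n}`, polynomial setting: if `f` is
quasihomogeneous with all weights `w_i ≥ 0` and `∑ w_i > 0`, then every element `tf(a')` of
`Lℛ·f` (with `a'` vanishing at `0`) lies in `L𝒦_{Ω_n}·f`, i.e. is of the form `tf(a) + B·f`
with `a` divergence-free vanishing at `0` and `B` an arbitrary matrix over `K[x]`. -/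
theorem wqh_KOmegan_tangent_space
    (K : Type*) [Field K] [CharZero K] (n p : ℕ)
    (f : Fin p → MvPolynomial (Fin n) K)
    (w : Fin n → ℕ) (δ : Fin p → ℤ)
    (hqh : ∀ j, ∑ i, (w i : ℤ) • (X i * pderiv i (f j)) = δ j • f j)
    (hwpos : 0 < ∑ i, w i) :
    ∀ a' : Fin n → MvPolynomial (Fin n) K, (∀ i, constantCoeff (a' i) = 0) →
      ∃ (a : Fin n → MvPolynomial (Fin n) K)
        (B : Fin p → Fin p → MvPolynomial (Fin n) K),
        (∀ i, constantCoeff (a i) = 0) ∧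
        (∑ i, pderiv i (a i) = 0) ∧
        ∀ j, ∑ i, a' i * pderiv i (f j) =
          (∑ i, a i * pderiv i (f j)) + ∑ l, B j l * f l := by
  intro a' ha'
  set W : ℕ := ∑ i, w i with hW
  set g : MvPolynomial (Fin n) K := ∑ i, pderiv i (a' i) with hg
  set cm : (Fin n →₀ ℕ) → ℕ := fun m => (∑ i, w i * m i) + W with hcmdef
  have hcm : ∀ m, ((cm m : K)) ≠ 0 := by
    intro m
    have : 0 < cm m := lt_of_lt_of_le hwpos (Nat.le_add_left _ _)
    exact Nat.cast_ne_zero.mpr this.ne'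
  set h : MvPolynomial (Fin n) K :=
    ∑ m ∈ g.support, monomial m (coeff m g / (cm m : K)) with hh
  -- the key identity: Euler operator + W applied to h gives g
  have hLh : (∑ i, C (w i : K) * (X i * pderiv i h)) + C (W : K) * h = g := by
    have hA : ∑ i, C (w i : K) * (X i * pderiv i h)
        = ∑ m ∈ g.support,
            monomial m (((∑ i, w i * m i : ℕ) : K) * (coeff m g / (cm m : K))) := by
      have : ∀ i ∈ univ, C (w i : K) * (X i * pderiv i h)
          = ∑ m ∈ g.support,
              C (w i : K) * (X i * pderiv i (monomial m (coeff m g / (cm m : K)))) := by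
        intro i _
        rw [hh, map_sum, Finset.mul_sum, Finset.mul_sum]
      rw [Finset.sum_congr rfl this, Finset.sum_comm]
      exact Finset.sum_congr rfl fun m _ => euler_op_monomial w m _
    have hB : C (W : K) * h
        = ∑ m ∈ g.support, monomial m ((W : K) * (coeff m g / (cm m : K))) := by
      rw [hh, Finset.mul_sum]
      exact Finset.sum_congr rfl fun m _ => C_mul_monomial
    rw [hA, hB, ← Finset.sum_add_distrib]
    have : ∀ m ∈ g.support,
        monomial m (((∑ i, w i * m i : ℕ) : K) * (coeff m g / (cm m : K)))
          + monomial m ((W : K) * (coeff m g / (cm m : K)))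
        = monomial m (coeff m g) := by
      intro m _
      rw [← map_add]
      congr 1
      rw [← add_mul]
      have : ((∑ i, w i * m i : ℕ) : K) + (W : K) = (cm m : K) := by
        rw [hcmdef]; push_cast; ring
      rw [this, mul_div_cancel₀ _ (hcm m)]
    rw [Finset.sum_congr rfl this]
    exact (as_sum g).symm
  refine ⟨fun i => a' i - C (w i : K) * (X i * h),
    fun j l => if l = j then δ j • h else 0, ?_, ?_, ?_⟩
  · intro i
    simp [ha' i]
  · have expand : ∀ i ∈ univ, pderiv i (a' i - C (w i : K) * (X i * h))
        = pderiv i (a' i) - (C (w i : K) * (X i * pderiv i h) + C (w i : K) * h) := by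
      intro i _
      rw [map_sub]
      congr 1
      rw [pderiv_C_mul, pderiv_mul, pderiv_X_self, one_mul]
      ring
    rw [Finset.sum_congr rfl expand, Finset.sum_sub_distrib, ← hg,
      Finset.sum_add_distrib, ← Finset.sum_mul]
    have : (∑ i, C (w i : K) : MvPolynomial (Fin n) K) = C (W : K) := by
      rw [hW, ← map_sum]; push_cast; ring_nf
    rw [this, hLh]
    ring
  · intro j
    have hqh' : ∑ i, C (w i : K) * (X i * pderiv i (f j)) = δ j • f j := by
      have h1 := hqh j
      simp only [zsmul_eq_mul, Int.cast_natCast] at h1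
      rw [zsmul_eq_mul, ← h1]
      exact Finset.sum_congr rfl fun i _ => by rw [C_eq_coe_nat]
    have hBsum : (∑ l, (if l = j then δ j • h else 0) * f l) = (δ j • h) * f j := by
      rw [Finset.sum_eq_single j]
      · rw [if_pos rfl]
      · intro l _ hl; rw [if_neg hl, zero_mul]
      · intro habs; exact absurd (Finset.mem_univ j) habs
    rw [hBsum]
    have : ∀ i ∈ univ, (a' i - C (w i : K) * (X i * h)) * pderiv i (f j)
        = a' i * pderiv i (f j) - h * (C (w i : K) * (X i * pderiv i (f j))) := by
      intro i _; ring
    rw [Finset.sum_congr rfl this, Finset.sum_sub_distrib, ← Finset.mul_sum, hqh',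
      smul_mul_assoc, mul_smul_comm]
    ring
end
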